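/- Let p be an odd prime, n a positive integer, and r any integer. Define S_1(n,r) = p^{−⌊(n−1)/(p−1)⌋} Σ_{k ≡ r (mod p)} (−1)^k C(n,k) and S_2(n,r) = p^{−⌊(n−1)/(p−1)⌋} Σ_{k ≡ pr (mod p²)} (−1)^k C(pn,k). Then S_1(n,r) ≡ S_2(n,r) (mod p). -/

import Mathlib

open Finset

noncomputable abbrev AA (p : ℕ) := AddMonoidAlgebra ℤ (ZMod (p^2))

noncomputable def xx (p : ℕ) : AA p := AddMonoidAlgebra.single (1 : ZMod (p^2)) (1 : ℤ)

lemma one_sub_pow {R : Type*} [CommRing R] (z : R) (N : ℕ) :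
    (1 - z)^N = ∑ k ∈ range (N+1), ((-1)^k * (N.choose k) : ℤ) • z^k := by
  have h : (1 : R) - z = (-z) + 1 := by ring
  rw [h, add_pow]
  refine Finset.sum_congr rfl fun k _ => ?_
  rw [zsmul_eq_mul]
  push_cast
  ring

lemma xx_pow (p k : ℕ) : (xx p)^k = AddMonoidAlgebra.single ((k : ZMod (p^2))) (1:ℤ) := by
  rw [xx, AddMonoidAlgebra.single_pow, one_pow]
  congr 1
  simp

lemma xx_pow_apply (p k : ℕ) (s : ZMod (p^2)) :
    ((xx p)^k).coeff s = if ((k : ZMod (p^2))) = s then (1:ℤ) else 0 := by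
  rw [xx_pow]
  exact Finsupp.single_apply

lemma sum_smul_pow_apply (p M : ℕ) (c : ℕ → ℤ) (e : ℕ → ℕ) (s : ZMod (p^2)) :
    (∑ k ∈ range M, c k • (xx p)^(e k)).coeff s
      = ∑ k ∈ range M, if ((e k : ℕ) : ZMod (p^2)) = s then c k else 0 := by
  rw [AddMonoidAlgebra.coeff_sum, Finset.sum_apply']
  refine Finset.sum_congr rfl fun k _ => ?_
  rw [AddMonoidAlgebra.coeff_smul, Finsupp.smul_apply, xx_pow_apply]
  split <;> simp

lemma pow_apply' (p a N : ℕ) (s : ZMod (p^2)) :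
    ((1 - (xx p)^a)^N).coeff s
      = ∑ k ∈ range (N+1), if ((a*k : ℕ) : ZMod (p^2)) = s then (-1)^k * (N.choose k : ℤ) else 0 := by
  rw [one_sub_pow]
  simp_rw [← pow_mul]
  rw [sum_smul_pow_apply]

lemma choose_pred_congr (p : ℕ) (hp : p.Prime) :
    ∀ k < p, (p:ℤ) ∣ (-1)^k * ((p-1).choose k : ℤ) - 1 := by
  intro k
  induction k with
  | zero => simp
  | succ k ih =>
    intro hk
    have h1 := ih (by omega)
    have hpd : (p:ℤ) ∣ (p.choose (k+1) : ℤ) :=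
      Int.natCast_dvd_natCast.mpr (hp.dvd_choose_self (Nat.succ_ne_zero k) hk)
    have pascal : (p.choose (k+1) : ℤ) = ((p-1).choose k : ℤ) + ((p-1).choose (k+1) : ℤ) := by
      have : p.choose (k+1) = (p-1).choose k + (p-1).choose (k+1) := by
        conv_lhs => rw [show p = (p-1) + 1 by omega]
        exact Nat.choose_succ_succ _ _
      exact_mod_cast this
    have hre : (-1:ℤ)^(k+1) * ((p-1).choose (k+1) : ℤ) - 1
        = (-1)^(k+1) * (p.choose (k+1) : ℤ) + ((-1)^k * ((p-1).choose k : ℤ) - 1) := by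
      rw [pascal]; ring
    rw [hre]
    exact dvd_add (Dvd.dvd.mul_left hpd _) h1

lemma cyc_identity {R : Type*} [CommRing R] (p : ℕ) (hp : p.Prime) (z : R) :
    ∃ U : R, (1 - z)^(p-1) = (∑ i ∈ range p, z^i) + (p:ℤ) • U := by
  refine ⟨∑ k ∈ range p, ((((-1)^k * ((p-1).choose k : ℤ) - 1))/(p:ℤ)) • z^k, ?_⟩
  rw [one_sub_pow, show p - 1 + 1 = p from Nat.succ_pred_eq_of_pos hp.pos, Finset.smul_sum, ← Finset.sum_add_distrib]
  refine Finset.sum_congr rfl fun k hk => ?_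
  rw [smul_smul, Int.mul_ediv_cancel' (choose_pred_congr p hp k (mem_range.mp hk)),
    sub_smul, one_smul]
  abel

lemma split_sum {M : Type*} [AddCommGroup M] (p : ℕ) (hp : 0 < p) (f : ℕ → M) :
    ∑ j ∈ range (p+1), f j
      = f 0 + f p + ∑ j ∈ range (p+1), (if j = 0 ∨ j = p then 0 else f j) := by
  have key : ∀ j, f j = ((if j = 0 then f j else 0) + (if j = p then f j else 0))
      + (if j = 0 ∨ j = p then 0 else f j) := by
    intro j
    by_cases h0 : j = 0
    · subst h0; simp [hp.ne]
    · by_cases hp' : j = p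
      · subst hp'; simp [h0]
      · simp [h0, hp']
  rw [Finset.sum_congr rfl (fun j _ => key j), Finset.sum_add_distrib, Finset.sum_add_distrib,
    Finset.sum_ite_eq' (range (p+1)) 0 f, Finset.sum_ite_eq' (range (p+1)) p f]
  have h0 : (0:ℕ) ∈ range (p+1) := mem_range.mpr (by omega)
  have hpp : p ∈ range (p+1) := mem_range.mpr (by omega)
  rw [if_pos h0, if_pos hpp]

def hcoef (p j : ℕ) : ℤ := if j = 0 ∨ j = p then 0 else (-1)^j * ((p.choose j / p : ℕ) : ℤ)

lemma pow_p_identity {R : Type*} [CommRing R] (p : ℕ) (hp : p.Prime) (hodd : Odd p) (z : R) :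
    (1 - z)^p = 1 - z^p + (p:ℤ) • (∑ j ∈ range (p+1), hcoef p j • z^j) := by
  rw [one_sub_pow, Finset.smul_sum,
    split_sum p hp.pos (fun j => ((-1)^j * (p.choose j : ℤ)) • z^j)]
  have h0 : ((-1:ℤ)^0 * (p.choose 0 : ℤ)) • z^0 = 1 := by simp
  have hpp : ((-1:ℤ)^p * (p.choose p : ℤ)) • z^p = -(z^p) := by
    rw [hodd.neg_one_pow, Nat.choose_self]
    push_cast
    simp
  rw [h0, hpp]
  have hmid : ∀ j ∈ range (p+1),
      (if j = 0 ∨ j = p then 0 else ((-1:ℤ)^j * (p.choose j : ℤ)) • z^j)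
        = (p:ℤ) • (hcoef p j • z^j) := by
    intro j hj
    by_cases hc : j = 0 ∨ j = p
    · simp [hcoef, hc]
    · push_neg at hc
      have hjlt : j < p := by have := mem_range.mp hj; omega
      rw [if_neg (by tauto), hcoef, if_neg (by tauto), smul_smul]
      congr 1
      have hdvd : p ∣ p.choose j := hp.dvd_choose_self hc.1 hjlt
      have : ((p.choose j / p : ℕ) : ℤ) * (p:ℤ) = (p.choose j : ℤ) := by
        rw [← Nat.cast_mul, Nat.div_mul_cancel hdvd]
      rw [← this]; ring
  rw [Finset.sum_congr rfl hmid]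
  abel

lemma y_pow_p (p : ℕ) : ((xx p)^p)^p = 1 := by
  rw [← pow_mul, xx_pow]
  have : ((p*p : ℕ) : ZMod (p^2)) = 0 := by
    rw [ZMod.natCast_eq_zero_iff]
    exact dvd_of_eq (pow_two p)
  rw [this]
  exact AddMonoidAlgebra.one_def.symm

lemma phi_mul (p : ℕ) : (∑ i ∈ range p, ((xx p)^p)^i) * (1 - (xx p)^p) = 0 := by
  have h2 : (∑ i ∈ range p, ((xx p)^p)^i) * ((xx p)^p - 1) = 0 := by
    rw [geom_sum_mul, y_pow_p, sub_self]
  calc (∑ i ∈ range p, ((xx p)^p)^i) * (1 - (xx p)^p)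
      = -((∑ i ∈ range p, ((xx p)^p)^i) * ((xx p)^p - 1)) := by ring
    _ = 0 := by rw [h2, neg_zero]

lemma one_sub_y_pow_dvd (p : ℕ) (hp : p.Prime) :
    ∀ m : ℕ, 1 ≤ m → ∃ w : AA p, (1 - (xx p)^p)^m = ((p:ℤ)^((m-1)/(p-1))) • w := by
  intro m
  induction m using Nat.strong_induction_on with
  | _ m ih =>
    intro hm
    have hp2 : 2 ≤ p := hp.two_le
    by_cases hsmall : m < p
    · refine ⟨(1 - (xx p)^p)^m, ?_⟩
      rw [Nat.div_eq_of_lt (by omega), pow_zero, one_smul]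
    · push_neg at hsmall
      obtain ⟨U, hU⟩ := cyc_identity p hp ((xx p)^p)
      have hm'1 : 1 ≤ m - (p-1) := by omega
      have hm'lt : m - (p-1) < m := by omega
      obtain ⟨w, hw⟩ := ih (m - (p-1)) hm'lt hm'1
      have hstep : (1 - (xx p)^p)^(m - (p-1)) = (1 - (xx p)^p)^(m - (p-1) - 1) * (1 - (xx p)^p) := by
        rw [← pow_succ]
        congr 1
        omega
      have key : (1 - (xx p)^p)^m = (p:ℤ) • (U * (1 - (xx p)^p)^(m - (p-1))) := by
        calc (1 - (xx p)^p)^m = (1 - (xx p)^p)^(m-(p-1)) * (1 - (xx p)^p)^(p-1) := by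
              rw [← pow_add]
              congr 1
              omega
          _ = (1 - (xx p)^p)^(m-(p-1)) * (∑ i ∈ range p, ((xx p)^p)^i)
                + (p:ℤ) • (U * (1 - (xx p)^p)^(m-(p-1))) := by
              rw [hU, mul_add, mul_smul_comm, mul_comm ((1 - (xx p)^p)^(m-(p-1))) U]
          _ = (1 - (xx p)^p)^(m-(p-1)-1) * ((∑ i ∈ range p, ((xx p)^p)^i) * (1 - (xx p)^p))
                + (p:ℤ) • (U * (1 - (xx p)^p)^(m-(p-1))) := by
              congr 1
              rw [hstep, mul_assoc, mul_comm (1 - (xx p)^p)]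
          _ = (p:ℤ) • (U * (1 - (xx p)^p)^(m - (p-1))) := by
              rw [phi_mul p, mul_zero, zero_add]
      have hdiv : (m-1)/(p-1) = (m - (p-1) - 1)/(p-1) + 1 := by
        rw [show m - 1 = (m - (p-1) - 1) + (p-1) by omega]
        rw [Nat.add_div_right _ (by omega)]
      refine ⟨U * w, ?_⟩
      rw [key, hw, mul_smul_comm, smul_smul, hdiv]
      congr 1
      rw [pow_succ]
      ring

noncomputable def hElt (p : ℕ) : AA p := ∑ j ∈ range (p+1), hcoef p j • (xx p)^j

lemma pow_p_eq (p : ℕ) (hp : p.Prime) (hodd : Odd p) :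
    (1 - xx p)^p = (1 - (xx p)^p) + (p:ℤ) • hElt p := by
  rw [pow_p_identity p hp hodd (xx p), hElt]

lemma cast_mod_eq_zero (p : ℕ) (hp : 0 < p) (s : ZMod (p^2))
    (j k : ℕ) (hj0 : j ≠ 0) (hjlt : j < p)
    (hs : (ZMod.castHom (dvd_pow_self p two_ne_zero) (ZMod p)) s = 0) :
    ¬ (((j + p*k : ℕ) : ZMod (p^2)) = s) := by
  intro he
  have h1 : ((j + p*k : ℕ) : ZMod p) = 0 := by
    have h2 := congrArg (ZMod.castHom (dvd_pow_self p two_ne_zero) (ZMod p)) he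
    rw [map_natCast] at h2
    exact h2.trans hs
  rw [Nat.cast_add, Nat.cast_mul, ZMod.natCast_self, zero_mul, add_zero] at h1
  rw [ZMod.natCast_eq_zero_iff] at h1
  have := Nat.le_of_dvd (Nat.pos_of_ne_zero hj0) h1
  omega

lemma h_mul_y_pow_apply (p : ℕ) (hp : p.Prime) (k : ℕ) (s : ZMod (p^2))
    (hs : (ZMod.castHom (dvd_pow_self p two_ne_zero) (ZMod p)) s = 0) :
    ((hElt p) * ((xx p)^p)^k).coeff s = 0 := by
  rw [hElt, Finset.sum_mul, AddMonoidAlgebra.coeff_sum, Finset.sum_apply']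
  refine Finset.sum_eq_zero fun j hj => ?_
  rw [smul_mul_assoc, AddMonoidAlgebra.coeff_smul, Finsupp.smul_apply, ← pow_mul, ← pow_add, xx_pow, AddMonoidAlgebra.coeff_single, Finsupp.single_apply]
  by_cases hc : j = 0 ∨ j = p
  · have : hcoef p j = 0 := by rw [hcoef, if_pos hc]
    rw [this]
    simp
  · push_neg at hc
    have hjlt : j < p := by have := mem_range.mp hj; omega
    rw [if_neg (cast_mod_eq_zero p hp.pos s j k hc.1 hjlt hs)]
    simp

lemma h_mul_pow_apply (p : ℕ) (hp : p.Prime) (N : ℕ) (s : ZMod (p^2))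
    (hs : (ZMod.castHom (dvd_pow_self p two_ne_zero) (ZMod p)) s = 0) :
    ((hElt p) * (1 - (xx p)^p)^N).coeff s = 0 := by
  rw [one_sub_pow, Finset.mul_sum, AddMonoidAlgebra.coeff_sum, Finset.sum_apply']
  refine Finset.sum_eq_zero fun k _ => ?_
  rw [mul_smul_comm, AddMonoidAlgebra.coeff_smul, Finsupp.smul_apply, h_mul_y_pow_apply p hp k s hs, smul_zero]

/-- `∑_{k ≡ r (mod p), 0 ≤ k ≤ n} (-1)^k C(n,k)`. -/
def S1sum (p n : ℕ) (r : ℤ) : ℤ :=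
  ∑ k ∈ Finset.range (n + 1), if (k : ℤ) ≡ r [ZMOD p] then (-1) ^ k * (n.choose k : ℤ) else 0

/-- `S_1(n,r) = p^{-⌊(n-1)/(p-1)⌋} ∑_{k ≡ r (p)} (-1)^k C(n,k)`. -/
def S1 (p n : ℕ) (r : ℤ) : ℤ := S1sum p n r / (p : ℤ) ^ ((n - 1) / (p - 1))

/-- `∑_{k ≡ pr (mod p²), 0 ≤ k ≤ pn} (-1)^k C(pn,k)`. -/
def S2sum (p n : ℕ) (r : ℤ) : ℤ :=
  ∑ k ∈ Finset.range (p * n + 1),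
    if (k : ℤ) ≡ (p : ℤ) * r [ZMOD (p ^ 2 : ℕ)] then (-1) ^ k * ((p * n).choose k : ℤ) else 0

/-- `S_2(n,r) = p^{-⌊(n-1)/(p-1)⌋} ∑_{k ≡ pr (p²)} (-1)^k C(pn,k)`. -/
def S2 (p n : ℕ) (r : ℤ) : ℤ := S2sum p n r / (p : ℤ) ^ ((n - 1) / (p - 1))

lemma S2sum_eq (p n : ℕ) (r : ℤ) :
    S2sum p n r = ((1 - xx p)^(p*n)).coeff (((p:ℤ) * r : ℤ) : ZMod (p^2)) := by
  have h1 : (1 - xx p) = 1 - (xx p)^1 := by rw [pow_one]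
  rw [h1, pow_apply']
  unfold S2sum
  refine Finset.sum_congr rfl fun k _ => if_congr ?_ rfl rfl
  rw [one_mul, show ((k:ℕ) : ZMod (p^2)) = (((k:ℕ):ℤ) : ZMod (p^2)) from by push_cast; rfl,
    ZMod.intCast_eq_intCast_iff]

lemma S1sum_eq (p n : ℕ) (r : ℤ) (hp : 0 < p) :
    S1sum p n r = ((1 - (xx p)^p)^n).coeff (((p:ℤ) * r : ℤ) : ZMod (p^2)) := by
  rw [pow_apply']
  unfold S1sum
  refine Finset.sum_congr rfl fun k _ => if_congr ?_ rfl rfl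
  rw [show ((p*k : ℕ) : ZMod (p^2)) = (((p*k : ℕ):ℤ) : ZMod (p^2)) from by push_cast; rfl,
    ZMod.intCast_eq_intCast_iff]
  rw [Int.modEq_iff_dvd, Int.modEq_iff_dvd]
  push_cast
  rw [show ((p:ℤ)*r - (p:ℤ)*(k:ℤ)) = (p:ℤ) * (r - k) by ring, pow_two]
  exact (mul_dvd_mul_iff_left (show (p:ℤ) ≠ 0 by exact_mod_cast hp.ne')).symm

lemma exp_bound (p n i : ℕ) (hp : 3 ≤ p) (h2 : 2 ≤ i) (hin : i ≤ n - 1) (hn : 1 ≤ n) :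
    (n-1)/(p-1) + 1 ≤ i + (n - i - 1)/(p-1) := by
  by_cases hE : (n-1)/(p-1) + 1 ≤ i
  · exact hE.trans (Nat.le_add_right i _)
  · push_neg at hE
    set E := (n-1)/(p-1) with hE'
    have hiE : i ≤ E := by omega
    have h1 : E * (p-1) ≤ n - 1 := Nat.div_mul_le_self (n-1) (p-1)
    have key : (E + 1 - i) * (p-1) ≤ n - i - 1 := by
      have e1 : (E + 1 - i) * (p-1) + i * (p-1) = (E+1) * (p-1) := by
        rw [← Nat.add_mul]
        congr 1
        omega
      have e3 : (E+1) * (p-1) = E * (p-1) + (p-1) := by rw [Nat.add_mul, Nat.one_mul]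
      have e2a : i * (p-1) = i * (p-2) + i := by
        rw [show p-1 = (p-2)+1 by omega, Nat.mul_add, Nat.mul_one]
      have e2b : 2 * (p-2) ≤ i * (p-2) := Nat.mul_le_mul_right _ h2
      omega
    have : E + 1 - i ≤ (n - i - 1)/(p-1) := (Nat.le_div_iff_mul_le (by omega)).mpr key
    omega

theorem stmt14 (p n : ℕ) (r : ℤ) (hp : p.Prime) (hodd : Odd p) (hn : 1 ≤ n) :
    S1 p n r ≡ S2 p n r [ZMOD p] := by
  have hp3 : 3 ≤ p := by
    have h2 := hp.two_le
    have ho := Nat.odd_iff.mp hodd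
    omega
  set E := (n-1)/(p-1) with hE
  set s : ZMod (p^2) := (((p:ℤ) * r : ℤ) : ZMod (p^2)) with hs
  have hs0 : (ZMod.castHom (dvd_pow_self p two_ne_zero) (ZMod p)) s = 0 := by
    rw [hs, map_intCast]
    push_cast
    simp
  obtain ⟨w, hw⟩ := one_sub_y_pow_dvd p hp n hn
  have hS1 : S1sum p n r = (p:ℤ)^E * (w.coeff s) := by
    rw [S1sum_eq p n r hp.pos, hw, AddMonoidAlgebra.coeff_smul, Finsupp.smul_apply, smul_eq_mul]
  have hexp : (1 - xx p)^(p*n)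
      = ∑ i ∈ range (n+1),
          ((p:ℤ) • hElt p)^i * (1 - (xx p)^p)^(n-i) * ((n.choose i : ℕ) : AA p) := by
    rw [pow_mul, pow_p_eq p hp hodd, add_comm (1 - (xx p)^p) ((p:ℤ) • hElt p), add_pow]
  have hS2' : S2sum p n r
      = (∑ i ∈ range n,
          (((p:ℤ) • hElt p)^(i+1) * (1 - (xx p)^p)^(n-(i+1)) * ((n.choose (i+1) : ℕ) : AA p)).coeff s)
        + S1sum p n r := by
    rw [S2sum_eq, hexp, AddMonoidAlgebra.coeff_sum, Finset.sum_apply', Finset.sum_range_succ']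
    congr 1
    rw [pow_zero, one_mul, Nat.choose_zero_right, Nat.cast_one, mul_one, Nat.sub_zero,
      S1sum_eq p n r hp.pos]
  have hterm : ∀ (j : ℕ) (g : AA p) (N : ℕ),
      ((((p:ℤ) • hElt p)^j * g * ((N : ℕ) : AA p)).coeff s)
        = (p:ℤ)^j * ((N:ℤ) * (((hElt p)^j * g).coeff s)) := by
    intro j g N
    rw [smul_pow, smul_mul_assoc, smul_mul_assoc, AddMonoidAlgebra.coeff_smul, Finsupp.smul_apply, smul_eq_mul]
    congr 1
    rw [show ((N : ℕ) : AA p) = (N:ℤ) • (1 : AA p) from by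
        rw [zsmul_eq_mul, mul_one, Int.cast_natCast],
      mul_smul_comm, mul_one, AddMonoidAlgebra.coeff_smul, Finsupp.smul_apply, smul_eq_mul]
  have hdvd : ∀ i ∈ range n, (p:ℤ)^(E+1) ∣
      ((((p:ℤ) • hElt p)^(i+1) * (1 - (xx p)^p)^(n-(i+1)) * ((n.choose (i+1) : ℕ) : AA p)).coeff s) := by
    intro i hi
    have hin : i + 1 ≤ n := by have := mem_range.mp hi; omega
    rw [hterm]
    rcases Nat.eq_or_lt_of_le (show 1 ≤ i + 1 by omega) with h1 | h2
    · -- i + 1 = 1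
      rw [← h1, pow_one (hElt p), h_mul_pow_apply p hp (n-1) s hs0, mul_zero, mul_zero]
      exact dvd_zero _
    · -- 2 ≤ i + 1
      rcases Nat.eq_or_lt_of_le hin with hn' | hlt
      · -- i + 1 = n
        rw [hn', Nat.sub_self, pow_zero, mul_one]
        have hEn : E + 1 ≤ n := by
          have : E ≤ n - 1 := Nat.div_le_self _ _
          omega
        exact Dvd.dvd.mul_right (pow_dvd_pow _ hEn) _
      · -- i + 1 ≤ n - 1
        have hin' : i + 1 ≤ n - 1 := by omega
        have hm1 : 1 ≤ n - (i+1) := by omega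
        obtain ⟨w', hw'⟩ := one_sub_y_pow_dvd p hp (n - (i+1)) hm1
        rw [hw', mul_smul_comm, AddMonoidAlgebra.coeff_smul, Finsupp.smul_apply, smul_eq_mul]
        have hbound : E + 1 ≤ (i+1) + (n - (i+1) - 1)/(p-1) := by
          have := exp_bound p n (i+1) hp3 (by omega) hin' hn
          omega
        have : (p:ℤ)^(E+1) ∣ (p:ℤ)^(i+1) * (p:ℤ)^((n - (i+1) - 1)/(p-1)) := by
          rw [← pow_add]
          exact pow_dvd_pow _ hbound
        obtain ⟨c, hc⟩ := this
        refine ⟨c * ((n.choose (i+1) : ℤ) * (((hElt p)^(i+1) * w').coeff s)) / 1, ?_⟩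
        rw [Int.ediv_one]
        calc (p:ℤ)^(i+1) * ((n.choose (i+1) : ℤ) * ((p:ℤ)^((n-(i+1)-1)/(p-1)) * (((hElt p)^(i+1) * w').coeff s)))
            = ((p:ℤ)^(i+1) * (p:ℤ)^((n-(i+1)-1)/(p-1))) * ((n.choose (i+1) : ℤ) * (((hElt p)^(i+1) * w').coeff s)) := by ring
          _ = (p:ℤ)^(E+1) * (c * ((n.choose (i+1) : ℤ) * (((hElt p)^(i+1) * w').coeff s))) := by
              rw [hc]; ring
  obtain ⟨d, hd⟩ : (p:ℤ)^(E+1) ∣ S2sum p n r - S1sum p n r := by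
    rw [hS2', add_sub_cancel_right]
    exact Finset.dvd_sum hdvd
  have hpE : ((p:ℤ)^E) ≠ 0 := by
    have : (p:ℤ) ≠ 0 := by exact_mod_cast hp.pos.ne'
    exact pow_ne_zero _ this
  have hS1v : S1 p n r = w.coeff s := by
    rw [S1, ← hE, hS1, Int.mul_ediv_cancel_left _ hpE]
  have hS2v : S2 p n r = w.coeff s + p * d := by
    rw [S2, ← hE]
    have : S2sum p n r = (p:ℤ)^E * (w.coeff s + p * d) := by
      have h2 : S2sum p n r = S1sum p n r + (p:ℤ)^(E+1) * d := by omega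
      rw [h2, hS1]
      ring
    rw [this, Int.mul_ediv_cancel_left _ hpE]
  rw [hS1v, hS2v, Int.modEq_iff_dvd]
  refine ⟨d, ?_⟩
  ring
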